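/- Let d ≥ 1 and let γ, c ∈ ℚ[t] be polynomials of degree exactly d whose leading coefficients a_d, b_d satisfy a_d ≠ 0, b_d ≠ 0, and a_d ≠ b_d. Define the critical orbit sequence a : ℕ → ℚ[t] by a_0 = γ and a_{n+1} = (a_n − γ)² + c, and suppose that a_n is squarefree in ℚ[t] for every n with 1 ≤ n ≤ 16. Then the quadratic polynomial φ_{(γ,c)}(x) = (x − γ)² + c is stable over ℚ(t): for every n ≥ 1, the iterate φ_{(γ,c)}^n is irreducible as a polynomial over the field ℚ(t). -/

import Mathlib

set_option synthInstance.maxHeartbeats 1000000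
set_option maxHeartbeats 1600000

open Polynomial

/-- The `n`-fold iterate `φ^n` of a polynomial under composition (`φ^0 = x`). -/
noncomputable def polyIter {R : Type*} [CommRing R] (φ : Polynomial R) : ℕ → Polynomial R
  | 0 => Polynomial.X
  | n + 1 => φ.comp (polyIter φ n)

lemma polyIter_succ' {R : Type*} [CommRing R] (φ : Polynomial R) (n : ℕ) :
    polyIter φ (n + 1) = (polyIter φ n).comp φ := by
  induction n with
  | zero => simp [polyIter]
  | succ n ih =>
      show φ.comp (polyIter φ (n + 1)) = (φ.comp (polyIter φ n)).comp φ
      rw [ih, comp_assoc]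

section KeyStep

open IntermediateField

variable {K : Type*} [Field K]

lemma phi_monic (g c : K) : ((X - C g) ^ 2 + C c).Monic := by
  have h2 : ((X - C g) ^ 2).natDegree = 2 := by simp [natDegree_pow]
  have : ((X - C g) ^ 2).Monic := (monic_X_sub_C g).pow 2
  refine this.add_of_left ?_
  refine lt_of_le_of_lt degree_C_le ?_
  rw [degree_eq_natDegree this.ne_zero, h2]; norm_num

lemma phi_natDegree (g c : K) : ((X - C g) ^ 2 + C c).natDegree = 2 := by
  have h2 : ((X - C g) ^ 2).natDegree = 2 := by simp [natDegree_pow]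
  rw [natDegree_add_eq_left_of_natDegree_lt, h2]
  rw [h2]; simp [natDegree_C]

/-- A monic quadratic `(X - g)² + c` with no square root of `-c` is irreducible. -/
lemma quad_irred (g c : K) (h : ∀ s : K, s ^ 2 ≠ -c) :
    Irreducible ((X - C g) ^ 2 + C c) := by
  have hm := phi_monic g c
  have hd := phi_natDegree g c
  rw [hm.irreducible_iff_roots_eq_zero_of_degree_le_three (by omega) (by omega)]
  by_contra hroots
  obtain ⟨r, hr⟩ := Multiset.exists_mem_of_ne_zero hroots
  have := (mem_roots hm.ne_zero).mp hr
  simp only [IsRoot, eval_add, eval_pow, eval_sub, eval_X, eval_C] at this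
  exact h (r - g) (by linear_combination this)

/-- Key inductive step: if `f` is monic irreducible and `(-1)^(deg f) f(c)` is not a
square in `K`, then `f ∘ φ` is irreducible, where `φ = (X - g)² + c`. -/
lemma key_step (g c : K) (f : K[X]) (hfi : Irreducible f) (hfm : f.Monic)
    (hns : ∀ s : K, s ^ 2 ≠ (-1) ^ f.natDegree * f.eval c) :
    Irreducible (f.comp ((X - C g) ^ 2 + C c)) := by
  classical
  set φ : K[X] := (X - C g) ^ 2 + C c with hφ
  have hφm : φ.Monic := phi_monic g c
  have hφd : φ.natDegree = 2 := phi_natDegree g c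
  have hm0 : 0 < f.natDegree := hfi.natDegree_pos
  have hcm : (f.comp φ).Monic := hfm.comp hφm (by omega)
  have hcd : (f.comp φ).natDegree = f.natDegree * 2 := by
    rw [natDegree_comp, hφd]
  have hnu : ¬ IsUnit (f.comp φ) := by
    intro h
    have := natDegree_eq_zero_of_isUnit h
    omega
  obtain ⟨q, hqm, hqi, hqdvd⟩ := (f.comp φ).exists_monic_irreducible_factor hnu
  haveI := Fact.mk hqi
  set L := AdjoinRoot q with hL
  haveI : FiniteDimensional K L := (AdjoinRoot.powerBasis hqi.ne_zero).finite
  have hfinL : Module.finrank K L = q.natDegree := by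
    rw [(AdjoinRoot.powerBasis hqi.ne_zero).finrank, AdjoinRoot.powerBasis_dim]
  set α : L := AdjoinRoot.root q with hα
  have hαroot : aeval α (f.comp φ) = 0 := by
    obtain ⟨h, hh⟩ := hqdvd
    rw [hh, map_mul, hα, AdjoinRoot.aeval_eq, AdjoinRoot.mk_self, zero_mul]
  set x : L := (α - algebraMap K L g) ^ 2 with hx
  have hβ : aeval α φ = x + algebraMap K L c := by
    simp [hφ, hx]
  have hfβ : aeval (x + algebraMap K L c) f = 0 := by
    rw [← hβ, ← aeval_comp]
    exact hαroot
  have hminβ : minpoly K (x + algebraMap K L c) = f :=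
    (minpoly.eq_of_irreducible_of_monic hfi hfβ hfm).symm
  have hminx : minpoly K x = f.comp (X + C c) := by
    have h1 := minpoly.sub_algebraMap (A := K) (B := L) (x + algebraMap K L c) c
    rw [add_sub_cancel_right, hminβ] at h1
    exact h1
  have hxint : IsIntegral K x := .of_finite K x
  set M := K⟮x⟯ with hM
  have hfinM : Module.finrank K M = f.natDegree := by
    rw [IntermediateField.adjoin.finrank hxint, hminx, natDegree_comp]
    simp
  -- the generator is not a square in M
  have hnsM : ∀ s : M, s ^ 2 ≠ AdjoinSimple.gen K x := by
    intro s hs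
    set pb := IntermediateField.adjoin.powerBasis hxint with hpb
    have hnorm := Algebra.PowerBasis.norm_gen_eq_coeff_zero_minpoly pb
    have hgen : pb.gen = AdjoinSimple.gen K x := rfl
    rw [hgen, minpoly_gen, hminx] at hnorm
    have hdim : pb.dim = f.natDegree := by
      have : pb.dim = (minpoly K x).natDegree := rfl
      rw [this, hminx, natDegree_comp]; simp
    have hc0 : (f.comp (X + C c)).coeff 0 = f.eval c := by
      rw [coeff_zero_eq_eval_zero, eval_comp]
      simp
    rw [hdim, hc0] at hnorm
    apply hns (Algebra.norm K s)
    rw [← hnorm, ← hs, map_pow]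
  -- quadratic over M satisfied by α
  set gM := algebraMap K M g with hgM
  set q2 : Polynomial M := (X - C gM) ^ 2 + C (-(AdjoinSimple.gen K x)) with hq2
  have hq2m : q2.Monic := phi_monic _ _
  have hq2d : q2.natDegree = 2 := phi_natDegree _ _
  have hq2i : Irreducible q2 := by
    apply quad_irred
    intro s hs
    exact hnsM s (by rw [hs, neg_neg])
  have hq2root : aeval α q2 = 0 := by
    have h1 : algebraMap M L gM = algebraMap K L g := by
      rw [hgM, ← IsScalarTower.algebraMap_apply]
    have h2 : algebraMap M L (AdjoinSimple.gen K x) = x :=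
      IntermediateField.AdjoinSimple.algebraMap_gen K x
    simp only [hq2, map_add, map_pow, map_sub, map_neg, aeval_X, aeval_C, h1, h2]
    rw [hx]
    ring
  have hminα : minpoly M α = q2 :=
    (minpoly.eq_of_irreducible_of_monic hq2i hq2root hq2m).symm
  haveI : FiniteDimensional M L := FiniteDimensional.right K M L
  have htower : Module.finrank K M * Module.finrank M L = Module.finrank K L :=
    Module.finrank_mul_finrank K M L
  have h2le : 2 ≤ Module.finrank M L := by
    have := minpoly.natDegree_le (A := M) α
    rw [hminα, hq2d] at this
    exact this
  have hqle : q.natDegree ≤ f.natDegree * 2 := by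
    rw [← hcd]
    exact natDegree_le_of_dvd hqdvd hcm.ne_zero
  have h3 : f.natDegree * Module.finrank M L = q.natDegree := by
    rw [← hfinL, ← htower, hfinM]
  have hle2 : Module.finrank M L ≤ 2 :=
    Nat.le_of_mul_le_mul_left (h3 ▸ hqle) hm0
  have hqdeg : q.natDegree = f.natDegree * 2 := by
    rw [← h3, le_antisymm hle2 h2le]
  -- q = f.comp φ
  obtain ⟨u, hu⟩ := hqdvd
  have hu0 : u ≠ 0 := by
    rintro rfl
    rw [mul_zero] at hu
    exact hcm.ne_zero hu
  have hudeg : u.natDegree = 0 := by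
    have := hu ▸ hcd
    rw [natDegree_mul hqi.ne_zero hu0] at this
    omega
  have huC : u = C (u.coeff 0) := eq_C_of_natDegree_eq_zero hudeg
  have hulc : u.coeff 0 = 1 := by
    have h1 : (f.comp φ).leadingCoeff = q.leadingCoeff * u.leadingCoeff := by
      rw [hu, leadingCoeff_mul]
    rw [hcm.leadingCoeff, hqm.leadingCoeff, one_mul] at h1
    rw [leadingCoeff, hudeg] at h1
    exact h1.symm
  have : f.comp φ = q := by
    rw [hu, huC, hulc, map_one, mul_one]
  rw [this]
  exact hqi

lemma iter_monic (g c : K) (n : ℕ) : (polyIter ((X - C g) ^ 2 + C c) n).Monic := by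
  induction n with
  | zero => exact monic_X
  | succ n ih =>
      rw [polyIter_succ']
      exact ih.comp (phi_monic g c) (by rw [phi_natDegree]; omega)

lemma iter_natDegree (g c : K) (n : ℕ) :
    (polyIter ((X - C g) ^ 2 + C c) n).natDegree = 2 ^ n := by
  induction n with
  | zero => simp [polyIter]
  | succ n ih =>
      rw [polyIter_succ', natDegree_comp, ih, phi_natDegree, pow_succ]

end KeyStep

lemma not_sq_ratfunc (p : Polynomial ℚ) (h : ∀ q : Polynomial ℚ, q ^ 2 ≠ p) :
    ∀ s : RatFunc ℚ, s ^ 2 ≠ algebraMap (Polynomial ℚ) (RatFunc ℚ) p := by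
  intro s hs
  have hint : IsIntegral (Polynomial ℚ) s := by
    refine ⟨X ^ 2 - C p, monic_X_pow_sub_C p (by norm_num), ?_⟩
    simp only [eval₂_sub, eval₂_pow, eval₂_X, eval₂_C, hs, sub_self]
  obtain ⟨q, hq⟩ := IsIntegrallyClosed.isIntegral_iff.mp hint
  apply h q
  apply IsFractionRing.injective (Polynomial ℚ) (RatFunc ℚ)
  rw [map_pow, hq, hs]

lemma sqfree_not_sq (p : Polynomial ℚ) (hsf : Squarefree p) (hdeg : p.natDegree ≠ 0) :
    ∀ q : Polynomial ℚ, q ^ 2 ≠ p := by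
  intro q hq
  have hu := hsf q (by rw [← sq, hq])
  exact hdeg (natDegree_eq_zero_of_isUnit (hq ▸ hu.pow (n := 2)))

theorem stmt_14 (d : ℕ) (hd : 1 ≤ d) (γ c : Polynomial ℚ)
    (hγd : γ.natDegree = d) (hcd : c.natDegree = d)
    (hγ0 : γ.coeff d ≠ 0) (hc0 : c.coeff d ≠ 0) (hne : γ.coeff d ≠ c.coeff d)
    (a : ℕ → Polynomial ℚ) (h0 : a 0 = γ)
    (hrec : ∀ n, a (n + 1) = (a n - γ) ^ 2 + c)
    (hsf : ∀ n, 1 ≤ n → n ≤ 16 → Squarefree (a n)) :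
    ∀ n : ℕ, 1 ≤ n →
      Irreducible
        (polyIter
          ((X - C (algebraMap (Polynomial ℚ) (RatFunc ℚ) γ)) ^ 2
            + C (algebraMap (Polynomial ℚ) (RatFunc ℚ) c)) n) := by
  classical
  set ι := algebraMap (Polynomial ℚ) (RatFunc ℚ) with hι
  set G := ι γ with hG
  set Cc := ι c with hCc
  set φ : Polynomial (RatFunc ℚ) := (X - C G) ^ 2 + C Cc with hφ
  have ha1 : a 1 = c := by rw [hrec 0, h0]; ring
  -- degree of (c - γ)
  have hcγd : (c - γ).natDegree = d := by
    apply le_antisymm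
    · exact le_trans (natDegree_sub_le c γ) (by rw [hcd, hγd]; simp)
    · apply le_natDegree_of_ne_zero
      rw [coeff_sub]
      exact sub_ne_zero.mpr (Ne.symm hne)
  have hc_ne : c ≠ 0 := by
    intro h
    rw [h] at hcd
    simp at hcd
    omega
  -- degrees of the orbit
  have hdeg : ∀ n, 2 ≤ n → (a n).natDegree = 2 ^ (n - 1) * d := by
    intro n hn
    obtain ⟨k, rfl⟩ : ∃ k, n = k + 2 := ⟨n - 2, by omega⟩
    clear hn
    induction k with
    | zero =>
        rw [hrec 1, ha1]
        have h1 : ((c - γ) ^ 2).natDegree = 2 * d := by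
          rw [natDegree_pow, hcγd]
        rw [natDegree_add_eq_left_of_natDegree_lt, h1]
        · norm_num
        · rw [h1, hcd]; omega
    | succ k ih =>
        rw [hrec (k + 2)]
        have hk : (a (k + 2)).natDegree = 2 ^ (k + 1) * d := by
          simpa using ih
        have hsub : (a (k + 2) - γ).natDegree = 2 ^ (k + 1) * d := by
          rw [natDegree_sub_eq_left_of_natDegree_lt, hk]
          rw [hk, hγd]
          have : (2:ℕ) ^ (k + 1) ≥ 2 := Nat.one_lt_two_pow (by omega)
          nlinarith
        have h1 : ((a (k + 2) - γ) ^ 2).natDegree = 2 ^ (k + 2) * d := by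
          rw [natDegree_pow, hsub]; ring
        rw [natDegree_add_eq_left_of_natDegree_lt, h1]
        · norm_num
        · rw [h1, hcd]
          have : (2:ℕ) ^ (k + 2) ≥ 2 := Nat.one_lt_two_pow (by omega)
          nlinarith
  -- a n is not a square in ℚ[t] for n ≥ 2
  have hnotsq : ∀ n, 2 ≤ n → ∀ q : Polynomial ℚ, q ^ 2 ≠ a n := by
    intro n hn
    rcases le_or_gt n 16 with hle | hgt
    · exact sqfree_not_sq _ (hsf n (by omega) hle)
        (by rw [hdeg n hn]; positivity)
    · -- degree argument: a n = u² + c with deg u > deg c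
      intro b hb
      have hn3 : 3 ≤ n := by omega
      obtain ⟨m, rfl⟩ : ∃ m, n = m + 1 := ⟨n - 1, by omega⟩
      set u : Polynomial ℚ := a m - γ with hu
      have hud : u.natDegree = 2 ^ (m - 1) * d := by
        rw [hu, natDegree_sub_eq_left_of_natDegree_lt, hdeg m (by omega)]
        rw [hdeg m (by omega), hγd]
        have : (2:ℕ) ^ (m - 1) ≥ 2 := Nat.one_lt_two_pow (by omega)
        nlinarith
      have hudgt : d < u.natDegree := by
        rw [hud]
        have : (2:ℕ) ^ (m - 1) ≥ 2 := Nat.one_lt_two_pow (by omega)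
        nlinarith
      have hkey : (b - u) * (b + u) = c := by
        have := hrec m
        rw [← hu] at this
        rw [this] at hb
        linear_combination hb
      have hbu1 : b - u ≠ 0 := by
        intro h
        rw [h, zero_mul] at hkey
        exact hc_ne hkey.symm
      have hbu2 : b + u ≠ 0 := by
        intro h
        rw [h, mul_zero] at hkey
        exact hc_ne hkey.symm
      have hdsum : (b - u).natDegree + (b + u).natDegree = d := by
        rw [← natDegree_mul hbu1 hbu2, hkey, hcd]
      have h2u : (b + u) - (b - u) = C 2 * u := by
        have hC2 : (C 2 : Polynomial ℚ) = 2 := map_ofNat C 2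
        rw [hC2]; ring
      have : u.natDegree ≤ d := by
        have h5 : ((b + u) - (b - u)).natDegree ≤ d := by
          refine le_trans (natDegree_sub_le _ _) ?_
          omega
        rw [h2u, natDegree_C_mul (by norm_num)] at h5
        exact h5
      omega
  -- evaluation identity
  have heval : ∀ n, (polyIter φ n).eval Cc = ι (a (n + 1)) := by
    intro n
    induction n with
    | zero => simp [polyIter, ha1]; exact hCc
    | succ n ih =>
        show (φ.comp (polyIter φ n)).eval Cc = ι (a (n + 2))
        rw [eval_comp, ih, hrec (n + 1)]
        simp only [hφ, eval_add, eval_pow, eval_sub, eval_X, eval_C]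
        rw [hG, hCc, map_add, map_pow, map_sub]
  -- main induction
  intro n hn
  induction n with
  | zero => omega
  | succ n ih =>
      rcases Nat.eq_or_lt_of_le hn with h1 | h2
      · -- n + 1 = 1
        have hn0 : n = 0 := by omega
        subst hn0
        have : polyIter φ 1 = φ := by
          rw [polyIter_succ']
          show (Polynomial.X).comp φ = φ
          rw [X_comp]
        rw [this, hφ]
        apply quad_irred
        intro s hs
        have : s ^ 2 = ι (-c) := by rw [hs, hCc, map_neg]
        refine not_sq_ratfunc (-c) ?_ s this
        intro q hq
        have hsfc : Squarefree c := ha1 ▸ hsf 1 (by norm_num) (by norm_num)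
        have hdvd : q * q ∣ c := by
          refine Dvd.intro (-1) ?_
          rw [← sq, hq]; ring
        have hu := hsfc q hdvd
        have : c.natDegree = 0 := by
          have : c = -(q^2) := by rw [hq]; ring
          rw [this]
          simpa using natDegree_eq_zero_of_isUnit (hu.pow (n := 2))
        omega
      · -- n ≥ 1 inductive step
        have hn1 : 1 ≤ n := by omega
        have hirr := ih hn1
        rw [polyIter_succ']
        set f := polyIter φ n with hf
        have hfm : f.Monic := iter_monic G Cc n
        have hfd : f.natDegree = 2 ^ n := iter_natDegree G Cc n
        rw [hφ]
        apply key_step G Cc f hirr hfm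
        intro s hs
        have heven : Even (2 ^ n) := by
          exact (Nat.even_pow).mpr ⟨even_two, by omega⟩
        rw [hfd, heven.neg_one_pow, one_mul, heval n] at hs
        exact hnotsq (n + 1) (by omega) |> fun h => not_sq_ratfunc _ h s hs
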